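/- Let L, z₁, x₁, z₂, x₂, ..., z_q, x_q be jointly distributed random variables where L takes values in finite subsets of a universe U, each xᵢ takes values in U, and the xᵢ are pairwise distinct (xᵢ ≠ xⱼ for i ≠ j almost surely). Given δ > 0, conditioned on a prefix (z₁,x₁,...,zᵢ), call xᵢ δ-heavy if Pr[xᵢ ∈ L | z₁,x₁,...,zᵢ] ≥ δ, and let S = {xᵢ : xᵢ is δ-heavy}. Then E[|S|] ≤ E[|L|]/δ. -/

import Mathlib

open scoped Classical

/-- Heavy-query lemma (Austrin et al.): the expected number of δ-heavy query
points is at most E[|L|]/δ.  Here `Hist i ω ω'` says that `ω'` agrees with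
`ω` on the history z₁,x₁,…,z_i, and `heavy i ω` says that, conditioned on
this history, the probability that `x i` lies in `L` is at least δ. -/
theorem stmt_1 {Ω U Z : Type*} [Fintype Ω] [DecidableEq U]
    (μ : Ω → ℝ) (hμ0 : ∀ ω, 0 ≤ μ ω) (hμ1 : ∑ ω, μ ω = 1)
    (q : ℕ) (L : Ω → Finset U) (z : Fin q → Ω → Z) (x : Fin q → Ω → U)
    (hdist : ∀ ω, ∀ i j : Fin q, i ≠ j → x i ω ≠ x j ω)
    (δ : ℝ) (hδ : 0 < δ)
    (Hist : Fin q → Ω → Ω → Prop)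
    (hHist : ∀ i ω ω', Hist i ω ω' ↔
      (∀ j : Fin q, j ≤ i → z j ω' = z j ω) ∧ (∀ j : Fin q, j < i → x j ω' = x j ω))
    (heavy : Fin q → Ω → Prop)
    (hheavy : ∀ i ω, heavy i ω ↔
      δ * ∑ ω' ∈ Finset.univ.filter (fun ω' => Hist i ω ω'), μ ω' ≤
        ∑ ω' ∈ Finset.univ.filter (fun ω' => Hist i ω ω' ∧ x i ω' ∈ L ω'), μ ω')
    (S : Ω → Finset U)
    (hS : ∀ ω, S ω = (Finset.univ.filter (fun i => heavy i ω)).image (fun i => x i ω)) :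
    ∑ ω, μ ω * ((S ω).card : ℝ) ≤ (∑ ω, μ ω * ((L ω).card : ℝ)) / δ := by
  -- basic facts about the equivalence relation Hist i
  have hRrefl : ∀ (i : Fin q) ω, Hist i ω ω := by
    intro i ω; rw [hHist]; exact ⟨fun _ _ => rfl, fun _ _ => rfl⟩
  have hRsymm : ∀ (i : Fin q) ω ω', Hist i ω ω' → Hist i ω' ω := by
    intro i ω ω' h; rw [hHist] at h ⊢
    exact ⟨fun j hj => (h.1 j hj).symm, fun j hj => (h.2 j hj).symm⟩
  have hRtrans : ∀ (i : Fin q) ω ω' ω'', Hist i ω ω' → Hist i ω' ω'' → Hist i ω ω'' := by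
    intro i ω ω' ω'' h h'; rw [hHist] at h h' ⊢
    exact ⟨fun j hj => (h'.1 j hj).trans (h.1 j hj),
           fun j hj => (h'.2 j hj).trans (h.2 j hj)⟩
  -- the key per-index inequality
  have key : ∀ i : Fin q,
      δ * ∑ ω ∈ Finset.univ.filter (fun ω => heavy i ω), μ ω ≤
        ∑ ω ∈ Finset.univ.filter (fun ω => x i ω ∈ L ω), μ ω := by
    intro i
    set f : Ω → ℝ := fun ω => ∑ ω' ∈ Finset.univ.filter (fun ω' => Hist i ω ω'), μ ω' with hf
    set g : Ω → ℝ := fun ω =>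
      ∑ ω' ∈ Finset.univ.filter (fun ω' => Hist i ω ω' ∧ x i ω' ∈ L ω'), μ ω' with hg
    have hf0 : ∀ ω, 0 ≤ f ω := fun ω => Finset.sum_nonneg fun _ _ => hμ0 _
    have hμf : ∀ ω, μ ω ≤ f ω := fun ω =>
      Finset.single_le_sum (f := fun ω' => μ ω') (fun _ _ => hμ0 _)
        (Finset.mem_filter.2 ⟨Finset.mem_univ _, hRrefl i ω⟩)
    have hfconst : ∀ ω ω', Hist i ω ω' → f ω = f ω' := by
      intro ω ω' h
      apply Finset.sum_congr _ (fun _ _ => rfl)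
      ext ω''
      simp only [Finset.mem_filter, Finset.mem_univ, true_and]
      exact ⟨fun h2 => hRtrans i ω' ω ω'' (hRsymm i ω ω' h) h2,
             fun h2 => hRtrans i ω ω' ω'' h h2⟩
    rw [Finset.mul_sum]
    calc ∑ ω ∈ Finset.univ.filter (fun ω => heavy i ω), δ * μ ω
        ≤ ∑ ω ∈ Finset.univ.filter (fun ω => heavy i ω),
            (if f ω = 0 then 0 else μ ω / f ω * g ω) := by
          apply Finset.sum_le_sum
          intro ω hω
          have hh : δ * f ω ≤ g ω := (hheavy i ω).1 (Finset.mem_filter.1 hω).2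
          by_cases h0 : f ω = 0
          · have hμω : μ ω = 0 := le_antisymm (h0 ▸ hμf ω) (hμ0 ω)
            simp [h0, hμω]
          · rw [if_neg h0]
            have heq : δ * μ ω = μ ω / f ω * (δ * f ω) := by field_simp
            rw [heq]
            exact mul_le_mul_of_nonneg_left hh (div_nonneg (hμ0 ω) (hf0 ω))
      _ = ∑ ω : Ω, ∑ ω' : Ω,
            (if heavy i ω ∧ ¬ f ω = 0 ∧ Hist i ω ω' ∧ x i ω' ∈ L ω'
              then μ ω / f ω * μ ω' else 0) := by
          rw [Finset.sum_filter]
          apply Finset.sum_congr rfl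
          intro ω _
          by_cases hh : heavy i ω
          · by_cases h0 : f ω = 0
            · simp [hh, h0]
            · simp only [hh, h0, if_true, if_false, true_and, not_false_iff]
              simp only [hg]
              rw [Finset.sum_filter, Finset.mul_sum]
              apply Finset.sum_congr rfl
              intro ω' _
              by_cases hc : Hist i ω ω' ∧ x i ω' ∈ L ω' <;> simp [hc]
          · simp [hh]
      _ = ∑ ω' : Ω, ∑ ω : Ω,
            (if heavy i ω ∧ ¬ f ω = 0 ∧ Hist i ω ω' ∧ x i ω' ∈ L ω'
              then μ ω / f ω * μ ω' else 0) := Finset.sum_comm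
      _ ≤ ∑ ω' : Ω, (if x i ω' ∈ L ω' then μ ω' else 0) := by
          apply Finset.sum_le_sum
          intro ω' _
          by_cases hL : x i ω' ∈ L ω'
          · rw [if_pos hL]
            calc ∑ ω : Ω, (if heavy i ω ∧ ¬ f ω = 0 ∧ Hist i ω ω' ∧ x i ω' ∈ L ω'
                    then μ ω / f ω * μ ω' else 0)
                ≤ ∑ ω : Ω, (if Hist i ω' ω then μ ω else 0) * (μ ω' / f ω') := by
                  apply Finset.sum_le_sum
                  intro ω _
                  by_cases hc : heavy i ω ∧ ¬ f ω = 0 ∧ Hist i ω ω' ∧ x i ω' ∈ L ω'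
                  · rw [if_pos hc, if_pos (hRsymm i ω ω' hc.2.2.1)]
                    rw [hfconst ω ω' hc.2.2.1]
                    rw [div_mul_eq_mul_div, mul_div_assoc]
                  · rw [if_neg hc]
                    apply mul_nonneg _ (div_nonneg (hμ0 ω') (hf0 ω'))
                    by_cases hh : Hist i ω' ω <;> simp [hh, hμ0 ω]
              _ = f ω' * (μ ω' / f ω') := by
                  rw [← Finset.sum_mul]
                  congr 1
                  simp only [hf]
                  rw [Finset.sum_filter]
              _ ≤ μ ω' := by
                  by_cases h0 : f ω' = 0
                  · simp [h0, hμ0 ω']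
                  · rw [mul_div_assoc', mul_comm, mul_div_assoc, div_self h0, mul_one]
          · have : ∀ ω : Ω, (if heavy i ω ∧ ¬ f ω = 0 ∧ Hist i ω ω' ∧ x i ω' ∈ L ω'
                then μ ω / f ω * μ ω' else 0) = 0 := by
              intro ω
              rw [if_neg]
              rintro ⟨_, _, _, h⟩; exact hL h
            simp [this, hL]
      _ = ∑ ω ∈ Finset.univ.filter (fun ω => x i ω ∈ L ω), μ ω := by
          rw [Finset.sum_filter]
  -- number of indices hitting L is at most |L ω|
  have hitL : ∀ ω, ((Finset.univ.filter (fun i : Fin q => x i ω ∈ L ω)).card : ℝ)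
      ≤ ((L ω).card : ℝ) := by
    intro ω
    have : (Finset.univ.filter (fun i : Fin q => x i ω ∈ L ω)).card ≤ (L ω).card := by
      apply Finset.card_le_card_of_injOn (fun i => x i ω)
      · intro i hi; exact (Finset.mem_filter.1 hi).2
      · intro i _ j _ hij
        by_contra hne
        exact hdist ω i j hne hij
    exact_mod_cast this
  -- main chain
  have main : δ * ∑ ω, μ ω * ((S ω).card : ℝ) ≤ ∑ ω, μ ω * ((L ω).card : ℝ) := by
    calc δ * ∑ ω, μ ω * ((S ω).card : ℝ)
        ≤ δ * ∑ ω, μ ω * ((Finset.univ.filter (fun i : Fin q => heavy i ω)).card : ℝ) := by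
          apply mul_le_mul_of_nonneg_left _ hδ.le
          apply Finset.sum_le_sum
          intro ω _
          apply mul_le_mul_of_nonneg_left _ (hμ0 ω)
          exact_mod_cast (by rw [hS]; exact Finset.card_image_le)
      _ = ∑ i : Fin q, δ * ∑ ω ∈ Finset.univ.filter (fun ω => heavy i ω), μ ω := by
          rw [← Finset.mul_sum]
          congr 1
          calc ∑ ω, μ ω * ((Finset.univ.filter (fun i : Fin q => heavy i ω)).card : ℝ)
              = ∑ ω, ∑ i : Fin q, (if heavy i ω then μ ω else 0) := by
                apply Finset.sum_congr rfl
                intro ω _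
                rw [Finset.card_filter]
                push_cast
                rw [Finset.mul_sum]
                apply Finset.sum_congr rfl
                intro i _
                by_cases hh : heavy i ω <;> simp [hh]
            _ = ∑ i : Fin q, ∑ ω, (if heavy i ω then μ ω else 0) := Finset.sum_comm
            _ = ∑ i : Fin q, ∑ ω ∈ Finset.univ.filter (fun ω => heavy i ω), μ ω := by
                apply Finset.sum_congr rfl
                intro i _
                rw [Finset.sum_filter]
      _ ≤ ∑ i : Fin q, ∑ ω ∈ Finset.univ.filter (fun ω => x i ω ∈ L ω), μ ω :=
          Finset.sum_le_sum fun i _ => key i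
      _ = ∑ ω, μ ω * ((Finset.univ.filter (fun i : Fin q => x i ω ∈ L ω)).card : ℝ) := by
          calc ∑ i : Fin q, ∑ ω ∈ Finset.univ.filter (fun ω => x i ω ∈ L ω), μ ω
              = ∑ i : Fin q, ∑ ω, (if x i ω ∈ L ω then μ ω else 0) := by
                apply Finset.sum_congr rfl
                intro i _
                rw [Finset.sum_filter]
            _ = ∑ ω, ∑ i : Fin q, (if x i ω ∈ L ω then μ ω else 0) := Finset.sum_comm
            _ = _ := by
                apply Finset.sum_congr rfl
                intro ω _
                rw [Finset.card_filter]
                push_cast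
                rw [Finset.mul_sum]
                apply Finset.sum_congr rfl
                intro i _
                by_cases hh : x i ω ∈ L ω <;> simp [hh]
      _ ≤ ∑ ω, μ ω * ((L ω).card : ℝ) :=
          Finset.sum_le_sum fun ω _ => mul_le_mul_of_nonneg_left (hitL ω) (hμ0 ω)
  rw [le_div_iff₀ hδ]
  calc (∑ ω, μ ω * ((S ω).card : ℝ)) * δ
      = δ * ∑ ω, μ ω * ((S ω).card : ℝ) := mul_comm _ _
    _ ≤ _ := main
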